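/- Let X be a real N×P matrix and C a real N×L matrix such that the block matrix [X C] has full column rank P+L. Then (Xᵀ(I_N − P_C)X)⁻¹ = (XᵀX)⁻¹ + (XᵀX)⁻¹XᵀC(Cᵀ(I_N − P_X)C)⁻¹CᵀX(XᵀX)⁻¹. -/

import Mathlib

open Matrix

/-- The orthogonal projection matrix onto the column space of `M`:
`P_M = M (Mᵀ M)⁻¹ Mᵀ`. -/
noncomputable def proj {N K : ℕ} (M : Matrix (Fin N) (Fin K) ℝ) :
    Matrix (Fin N) (Fin N) ℝ :=
  M * (Mᵀ * M)⁻¹ * Mᵀ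

/- Auxiliary lemmas -/

lemma aux_mulVec_zero_of_rank {m n : Type*} [Fintype m] [Fintype n] [DecidableEq n]
    (M : Matrix m n ℝ) (h : M.rank = Fintype.card n) :
    ∀ v, M *ᵥ v = 0 → v = 0 := by
  have hker : LinearMap.ker M.mulVecLin = ⊥ := by
    have h1 := LinearMap.finrank_range_add_finrank_ker M.mulVecLin
    rw [Module.finrank_fintype_fun_eq_card] at h1
    have h2 : Module.finrank ℝ (LinearMap.ker M.mulVecLin) = 0 := by
      have : M.rank = Module.finrank ℝ (LinearMap.range M.mulVecLin) := rfl
      omega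
    exact Submodule.finrank_eq_zero.mp h2
  intro v hv
  exact (Matrix.ker_mulVecLin_eq_bot_iff.mp hker) v hv

lemma aux_posDef_transpose_mul_self {m n : Type*} [Fintype m] [Fintype n] [DecidableEq n]
    (B : Matrix m n ℝ) (h : ∀ v, B *ᵥ v = 0 → v = 0) : (Bᵀ * B).PosDef := by
  rw [Matrix.posDef_iff_dotProduct_mulVec]
  constructor
  · have := Matrix.isHermitian_conjTranspose_mul_self B
    simpa using this
  · intro x hx
    have hBx : B *ᵥ x ≠ 0 := fun hc => hx (h x hc)
    have hdp : star x ⬝ᵥ ((Bᵀ * B) *ᵥ x) = (B *ᵥ x) ⬝ᵥ (B *ᵥ x) := by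
      rw [star_trivial, ← Matrix.mulVec_mulVec, Matrix.dotProduct_mulVec,
        Matrix.vecMul_transpose]
    rw [hdp]
    have := Matrix.dotProduct_self_star_pos_iff (v := B *ᵥ x) |>.mpr hBx
    simpa using this

/-- The core algebraic identity (Woodbury-type). -/
lemma aux_key_alg {p l : Type*} [Fintype p] [Fintype l] [DecidableEq p] [DecidableEq l]
    (A a : Matrix p p ℝ) (B : Matrix p l ℝ) (D d T t : Matrix l l ℝ)
    (hA : A * a = 1) (hD : d * D = 1) (hT : T * t = 1)
    (h1 : Bᵀ * a * B = D - T) :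
    (A - B * d * Bᵀ) * (a + a * B * t * Bᵀ * a) = 1 := by
  have e1 : (A - B * d * Bᵀ) * (a + a * B * t * Bᵀ * a)
      = A * a + A * a * B * t * Bᵀ * a
        - (B * d * Bᵀ * a + B * d * (Bᵀ * a * B) * t * Bᵀ * a) := by
    simp only [Matrix.sub_mul, Matrix.mul_add, Matrix.mul_assoc]
    abel
  rw [e1, hA, Matrix.one_mul, h1]
  have e2 : B * d * (D - T) * t * Bᵀ * a = B * t * Bᵀ * a - B * d * Bᵀ * a := by
    rw [Matrix.mul_sub, Matrix.sub_mul, Matrix.sub_mul, Matrix.sub_mul]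
    congr 1
    · rw [Matrix.mul_assoc B d D, hD, Matrix.mul_one]
    · rw [Matrix.mul_assoc (B * d) T t, hT, Matrix.mul_one]
  rw [e2]
  abel

/-- If `[X, C]` has full column rank, then
`(Xᵀ(I - P_C)X)⁻¹ = (XᵀX)⁻¹ + (XᵀX)⁻¹XᵀC(Cᵀ(I - P_X)C)⁻¹CᵀX(XᵀX)⁻¹`. -/
theorem inv_XtPerpCX_eq
    (N P L : ℕ) (X : Matrix (Fin N) (Fin P) ℝ) (C : Matrix (Fin N) (Fin L) ℝ)
    (hW : (Matrix.fromCols X C).rank = P + L) :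
    (Xᵀ * ((1 : Matrix (Fin N) (Fin N) ℝ) - proj C) * X)⁻¹
      = (Xᵀ * X)⁻¹ + (Xᵀ * X)⁻¹ * Xᵀ * C *
          (Cᵀ * ((1 : Matrix (Fin N) (Fin N) ℝ) - proj X) * C)⁻¹ * Cᵀ * X * (Xᵀ * X)⁻¹ := by
  -- injectivity facts
  have hWinj : ∀ v, (Matrix.fromCols X C) *ᵥ v = 0 → v = 0 := by
    apply aux_mulVec_zero_of_rank
    simpa using hW
  have hzero : ∀ (x : Fin P → ℝ) (y : Fin L → ℝ), X *ᵥ x + C *ᵥ y = 0 → x = 0 ∧ y = 0 := by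
    intro x y h
    have h0 : (Matrix.fromCols X C) *ᵥ (Sum.elim x y) = 0 := by
      rw [Matrix.fromCols_mulVec_sumElim, h]
    have h1 := hWinj _ h0
    constructor
    · funext i; exact congrFun h1 (Sum.inl i)
    · funext i; exact congrFun h1 (Sum.inr i)
  have hXinj : ∀ v, X *ᵥ v = 0 → v = 0 := by
    intro v hv
    exact (hzero v 0 (by simp [hv])).1
  have hCinj : ∀ v, C *ᵥ v = 0 → v = 0 := by
    intro v hv
    exact (hzero 0 v (by simp [hv])).2
  -- invertibility of Gram matrices
  set A := Xᵀ * X with hAdef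
  set D := Cᵀ * C with hDdef
  have hApd : A.PosDef := aux_posDef_transpose_mul_self X hXinj
  have hDpd : D.PosDef := aux_posDef_transpose_mul_self C hCinj
  have hAdet : IsUnit A.det := (Matrix.isUnit_iff_isUnit_det A).mp hApd.isUnit
  have hDdet : IsUnit D.det := (Matrix.isUnit_iff_isUnit_det D).mp hDpd.isUnit
  have hAinv : A * A⁻¹ = 1 := Matrix.mul_nonsing_inv A hAdet
  have hAinv' : A⁻¹ * A = 1 := Matrix.nonsing_inv_mul A hAdet
  have hDinv' : D⁻¹ * D = 1 := Matrix.nonsing_inv_mul D hDdet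
  -- properties of Q = 1 - proj X
  set Q : Matrix (Fin N) (Fin N) ℝ := (1 : Matrix (Fin N) (Fin N) ℝ) - proj X with hQdef
  have hAsymm : Aᵀ = A := by
    rw [hAdef, Matrix.transpose_mul, Matrix.transpose_transpose]
  have hAinvsymm : (A⁻¹)ᵀ = A⁻¹ := by
    rw [Matrix.transpose_nonsing_inv, hAsymm]
  have hPsym : (proj X)ᵀ = proj X := by
    unfold proj
    rw [← hAdef, Matrix.transpose_mul, Matrix.transpose_mul, Matrix.transpose_transpose,
      hAinvsymm, ← Matrix.mul_assoc]
  have hPidem : proj X * proj X = proj X := by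
    unfold proj
    calc X * (Xᵀ * X)⁻¹ * Xᵀ * (X * (Xᵀ * X)⁻¹ * Xᵀ)
        = X * ((Xᵀ * X)⁻¹ * ((Xᵀ * X) * ((Xᵀ * X)⁻¹ * Xᵀ))) := by
          simp only [Matrix.mul_assoc]
      _ = X * (Xᵀ * X)⁻¹ * Xᵀ := by
          rw [← Matrix.mul_assoc (Xᵀ * X) _ _, show Xᵀ * X = A from hAdef.symm, hAinv,
            Matrix.one_mul]
          simp only [Matrix.mul_assoc]
  have hQsym : Qᵀ = Q := by
    rw [hQdef, Matrix.transpose_sub, Matrix.transpose_one, hPsym]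
  have hQidem : Q * Q = Q := by
    rw [hQdef]
    simp only [Matrix.sub_mul, Matrix.mul_sub, Matrix.one_mul, Matrix.mul_one, hPidem]
    abel
  -- T = Cᵀ Q C is positive definite
  set T := Cᵀ * Q * C with hTdef
  have hTeq : (Q * C)ᵀ * (Q * C) = T := by
    rw [Matrix.transpose_mul, hQsym, Matrix.mul_assoc, ← Matrix.mul_assoc Q Q C, hQidem,
      hTdef, Matrix.mul_assoc]
  have hQCinj : ∀ v, (Q * C) *ᵥ v = 0 → v = 0 := by
    intro v hv
    have hv' : Q *ᵥ (C *ᵥ v) = 0 := by rw [Matrix.mulVec_mulVec]; exact hv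
    have hCv : C *ᵥ v = (proj X) *ᵥ (C *ᵥ v) := by
      have : ((1 : Matrix (Fin N) (Fin N) ℝ) - proj X) *ᵥ (C *ᵥ v) = 0 := hv'
      rw [Matrix.sub_mulVec, Matrix.one_mulVec, sub_eq_zero] at this
      exact this
    have hXw : (proj X) *ᵥ (C *ᵥ v) = X *ᵥ (((Xᵀ * X)⁻¹ * Xᵀ * C) *ᵥ v) := by
      unfold proj
      simp only [Matrix.mulVec_mulVec, Matrix.mul_assoc]
    have hsum : X *ᵥ (-(((Xᵀ * X)⁻¹ * Xᵀ * C) *ᵥ v)) + C *ᵥ v = 0 := by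
      rw [Matrix.mulVec_neg, hCv, hXw]
      abel
    exact (hzero _ v hsum).2
  have hTpd : T.PosDef := by
    rw [← hTeq]
    exact aux_posDef_transpose_mul_self (Q * C) hQCinj
  have hTdet : IsUnit T.det := (Matrix.isUnit_iff_isUnit_det T).mp hTpd.isUnit
  have hTinv : T * T⁻¹ = 1 := Matrix.mul_nonsing_inv T hTdet
  -- the Schur-complement relations
  set B := Xᵀ * C with hBdef
  have hBT : Bᵀ = Cᵀ * X := by
    rw [hBdef, Matrix.transpose_mul, Matrix.transpose_transpose]
  have h1 : Bᵀ * A⁻¹ * B = D - T := by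
    rw [hTdef, hQdef]
    unfold proj
    rw [hBT, hBdef, hDdef, hAdef]
    rw [Matrix.mul_sub, Matrix.sub_mul, Matrix.mul_one]
    simp only [Matrix.mul_assoc]
    abel
  have hS : Xᵀ * ((1 : Matrix (Fin N) (Fin N) ℝ) - proj C) * X = A - B * D⁻¹ * Bᵀ := by
    unfold proj
    rw [hBT, hBdef, hDdef, hAdef]
    rw [Matrix.mul_sub, Matrix.sub_mul, Matrix.mul_one]
    simp only [Matrix.mul_assoc]
  -- conclude
  have hkey := aux_key_alg A A⁻¹ B D D⁻¹ T T⁻¹ hAinv hDinv' hTinv h1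
  rw [← hS] at hkey
  have := Matrix.inv_eq_right_inv hkey
  rw [this, hBT, hBdef]
  simp only [Matrix.mul_assoc]
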